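/- Let 𝔹 = (B, E, E^∨) be a DK-triple. Then the set of arrows B̄ := E^∨ ∘ E is a wide subcategory of B (it is closed under composition by (T3) and contains all identities), and the datum 𝔹̄ := (B̄, E, E^∨) is again a DK-triple, which is moreover reduced. -/

import Mathlib

open CategoryTheory CategoryTheory.Limits

universe v u v' u'

namespace DK

variable {B : Type u} [Category.{v} B]

/-- The singular arrows `Sing := E^∨_≠ ∘ B`: arrows of the form
(non-invertible dual Epi) ∘ (arbitrary arrow). -/
def Sing (Edual : MorphismProperty B) : MorphismProperty B :=
  fun X Y f => ∃ (Z : B) (g : X ⟶ Z) (h : Z ⟶ Y), Edual h ∧ ¬ IsIso h ∧ f = g ≫ h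

/-- The regular arrows `Reg := B ∖ Sing`. -/
def Regular (Edual : MorphismProperty B) : MorphismProperty B :=
  fun _ _ f => ¬ Sing Edual f

/-- The Monos `M := B ∖ (B ∘ E_≠)`: arrows which are not of the form
(arbitrary arrow) ∘ (non-invertible Epi). -/
def Mon (E : MorphismProperty B) : MorphismProperty B :=
  fun X Y f => ¬ ∃ (Z : B) (e : X ⟶ Z) (g : Z ⟶ Y), E e ∧ ¬ IsIso e ∧ f = e ≫ g

/-- Two arrows out of `b` are isomorphic as objects of the category `E(b)` of
(Epis) under `b`. -/
def EpiEquiv {b c c' : B} (e : b ⟶ c) (e' : b ⟶ c') : Prop :=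
  ∃ u : c ≅ c', e ≫ u.hom = e'

/-- Two arrows into `b` are isomorphic as objects of the category `E^∨(b)` of
(dual Epis) over `b`. -/
def DualEquiv {b c c' : B} (d : c ⟶ b) (d' : c' ⟶ b) : Prop :=
  ∃ u : c ≅ c', u.hom ≫ d' = d

/-- A (T1)-factorization of the arrow `f` as `e^∨ ∘ f̄ ∘ e` with `e ∈ E`,
`f̄ ∈ M ∩ Reg` and `e^∨ ∈ E^∨`. -/
structure Fact (E Edual : MorphismProperty B) {X Y : B} (f : X ⟶ Y) where
  Z : B
  W : B
  e : X ⟶ Z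
  m : Z ⟶ W
  d : W ⟶ Y
  he : E e
  hm : Mon E m ∧ Regular Edual m
  hd : Edual d
  fac : e ≫ m ≫ d = f

/-- Axiom (T2) at the object `b`: there are finitely many Epis out of `b` and
dual Epis into `b` up to isomorphism, and they can be enumerated by `Fin n`
(`n ≥ 1`) in such a way that the pairing matrix `⟨e_i ; e^∨_j⟩ = e_i ∘ e^∨_j`
has isomorphisms on the diagonal and non-isomorphisms below the diagonal. -/
def TriangularAt (E Edual : MorphismProperty B) (b : B) : Prop :=
  ∃ n : ℕ, 0 < n ∧ ∃ (cE : Fin n → B) (eR : ∀ i, b ⟶ cE i)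
      (cD : Fin n → B) (dR : ∀ i, cD i ⟶ b),
    (∀ i, E (eR i)) ∧ (∀ i, Edual (dR i)) ∧
    (∀ {c : B} (e : b ⟶ c), E e → ∃! i : Fin n, EpiEquiv e (eR i)) ∧
    (∀ {c : B} (d : c ⟶ b), Edual d → ∃! i : Fin n, DualEquiv d (dR i)) ∧
    (∀ i : Fin n, IsIso (dR i ≫ eR i)) ∧
    (∀ i j : Fin n, j < i → ¬ IsIso (dR j ≫ eR i))

/-- The diagonalizable version of axiom (T2) at `b`: the pairing matrix has
isomorphisms on the diagonal and non-isomorphisms in all off-diagonal spots. -/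
def DiagonalAt (E Edual : MorphismProperty B) (b : B) : Prop :=
  ∃ n : ℕ, 0 < n ∧ ∃ (cE : Fin n → B) (eR : ∀ i, b ⟶ cE i)
      (cD : Fin n → B) (dR : ∀ i, cD i ⟶ b),
    (∀ i, E (eR i)) ∧ (∀ i, Edual (dR i)) ∧
    (∀ {c : B} (e : b ⟶ c), E e → ∃! i : Fin n, EpiEquiv e (eR i)) ∧
    (∀ {c : B} (d : c ⟶ b), Edual d → ∃! i : Fin n, DualEquiv d (dR i)) ∧
    (∀ i : Fin n, IsIso (dR i ≫ eR i)) ∧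
    (∀ i j : Fin n, i ≠ j → ¬ IsIso (dR j ≫ eR i))

/-- A DK-triple `𝔹 = (B, E, E^∨)`: a category `B` with two wide subcategories
`E` (the Epis) and `E^∨` (the dual Epis), each containing all isomorphisms,
subject to the axioms (T1)–(T5). -/
structure DKTriple (B : Type u) [Category.{v} B] where
  /-- the Epis -/
  E : MorphismProperty B
  /-- the dual Epis -/
  Edual : MorphismProperty B
  E_iso : ∀ {X Y : B} (f : X ⟶ Y), IsIso f → E f
  Edual_iso : ∀ {X Y : B} (f : X ⟶ Y), IsIso f → Edual f
  E_comp : ∀ {X Y Z : B} {f : X ⟶ Y} {g : Y ⟶ Z}, E f → E g → E (f ≫ g)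
  Edual_comp : ∀ {X Y Z : B} {f : X ⟶ Y} {g : Y ⟶ Z}, Edual f → Edual g → Edual (f ≫ g)
  /-- (T1), existence part -/
  t1_exists : ∀ {X Y : B} (f : X ⟶ Y), Nonempty (Fact E Edual f)
  /-- (T1), uniqueness up to unique isomorphism -/
  t1_unique : ∀ {X Y : B} {f : X ⟶ Y} (F₁ F₂ : Fact E Edual f),
    ∃! p : (F₁.Z ≅ F₂.Z) × (F₁.W ≅ F₂.W),
      F₁.e ≫ p.1.hom = F₂.e ∧ p.1.hom ≫ F₂.m = F₁.m ≫ p.2.hom ∧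
        p.2.hom ≫ F₂.d = F₁.d
  /-- (T2) -/
  t2 : ∀ b : B, TriangularAt E Edual b
  /-- (T3): `E^∨ ∘ E` is closed under composition -/
  t3 : ∀ {X Y Z : B} {f : X ⟶ Y} {g : Y ⟶ Z},
    (∃ (W : B) (e : X ⟶ W) (d : W ⟶ Y), E e ∧ Edual d ∧ f = e ≫ d) →
    (∃ (W : B) (e : Y ⟶ W) (d : W ⟶ Z), E e ∧ Edual d ∧ g = e ≫ d) →
    ∃ (W : B) (e : X ⟶ W) (d : W ⟶ Z), E e ∧ Edual d ∧ f ≫ g = e ≫ d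
  /-- (T4): `(M ∩ Reg) ∘ (M ∩ Reg) ⊆ M` -/
  t4 : ∀ {X Y Z : B} {f : X ⟶ Y} {g : Y ⟶ Z},
    (Mon E f ∧ Regular Edual f) → (Mon E g ∧ Regular Edual g) → Mon E (f ≫ g)
  /-- (T5): `M ∘ Sing ⊆ Sing` -/
  t5 : ∀ {X Y Z : B} {f : X ⟶ Y} {g : Y ⟶ Z},
    Sing Edual f → Mon E g → Sing Edual (f ≫ g)

/-- A DK-triple is *reduced* if `B = E^∨ ∘ E`. -/
def DKTriple.Reduced (T : DKTriple B) : Prop :=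
  ∀ {X Y : B} (f : X ⟶ Y),
    ∃ (W : B) (e : X ⟶ W) (d : W ⟶ Y), T.E e ∧ T.Edual d ∧ f = e ≫ d

end DK

namespace DK

variable {B : Type u} [Category.{v} B]

/-- The set of arrows `B̄ := E^∨ ∘ E`. -/
def Bbar (T : DKTriple B) : MorphismProperty B := fun X Y f =>
  ∃ (W : B) (e : X ⟶ W) (d : W ⟶ Y), T.E e ∧ T.Edual d ∧ f = e ≫ d

/-- `B̄` contains all identities and is closed under composition (by (T3)),
i.e. it is a wide subcategory of `B`. -/
instance Bbar.isMultiplicative (T : DKTriple B) : (Bbar T).IsMultiplicative where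
  id_mem X := ⟨X, 𝟙 X, 𝟙 X, T.E_iso _ inferInstance, T.Edual_iso _ inferInstance,
    (Category.id_comp _).symm⟩
  comp_mem _ _ hf hg := T.t3 hf hg

section Lemmas

variable (T : DKTriple B)

lemma bbar_of_E {X Y : B} {f : X ⟶ Y} (hf : T.E f) : Bbar T f :=
  ⟨Y, f, 𝟙 Y, hf, T.Edual_iso _ inferInstance, (Category.comp_id _).symm⟩

lemma bbar_of_Edual {X Y : B} {f : X ⟶ Y} (hf : T.Edual f) : Bbar T f :=
  ⟨X, 𝟙 X, f, T.E_iso _ inferInstance, hf, (Category.id_comp _).symm⟩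

lemma bbar_of_isIso {X Y : B} (f : X ⟶ Y) (hf : IsIso f) : Bbar T f :=
  bbar_of_E T (T.E_iso f hf)

/-- A split mono in `E` is an isomorphism (via (T2)). -/
lemma splitMono_isIso {X Y : B} (e : X ⟶ Y) (he : T.E e) (r : Y ⟶ X)
    (hr : e ≫ r = 𝟙 X) : IsIso e := by
  obtain ⟨n, -, cE, eR, cD, dR, -, -, hEu, -, hdiag, -⟩ := T.t2 X
  obtain ⟨i, ⟨u, hu⟩, -⟩ := hEu e he
  have hw : IsIso (dR i ≫ eR i) := hdiag i
  set t : Y ⟶ X := u.hom ≫ inv (dR i ≫ eR i) ≫ dR i with ht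
  have h1 : t ≫ e = 𝟙 Y := by
    have h2 : dR i ≫ e = (dR i ≫ eR i) ≫ u.inv := by
      rw [← hu]; simp
    rw [ht]
    simp only [Category.assoc]
    rw [h2]
    rw [IsIso.inv_hom_id_assoc, Iso.hom_inv_id]
  have h3 : e ≫ t = 𝟙 X := by
    calc e ≫ t = e ≫ t ≫ (e ≫ r) := by rw [hr, Category.comp_id]
    _ = e ≫ (t ≫ e) ≫ r := by simp only [Category.assoc]
    _ = e ≫ r := by rw [h1, Category.id_comp]
    _ = 𝟙 X := hr
  exact ⟨t, h3, h1⟩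

/-- A split epi in `E^∨` is an isomorphism (via (T2)). -/
lemma splitEpi_isIso {X Y : B} (d : X ⟶ Y) (hd : T.Edual d) (s : Y ⟶ X)
    (hs : s ≫ d = 𝟙 Y) : IsIso d := by
  obtain ⟨n, -, cE, eR, cD, dR, -, -, -, hDu, hdiag, -⟩ := T.t2 Y
  obtain ⟨j, ⟨u, hu⟩, -⟩ := hDu d hd
  have hw : IsIso (dR j ≫ eR j) := hdiag j
  set t : Y ⟶ X := eR j ≫ inv (dR j ≫ eR j) ≫ u.inv with ht
  have h1 : d ≫ t = 𝟙 X := by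
    rw [ht, ← hu]
    simp only [Category.assoc]
    rw [← Category.assoc (dR j) (eR j), IsIso.hom_inv_id_assoc, Iso.hom_inv_id]
  have h2 : t ≫ d = 𝟙 Y := by
    have hts : t = s := by
      rw [← Category.id_comp t, ← hs, Category.assoc, h1, Category.comp_id]
    rw [hts]; exact hs
  exact ⟨t, h1, h2⟩

lemma mon_of_isIso {X Y : B} (f : X ⟶ Y) (hf : IsIso f) : Mon T.E f := by
  rintro ⟨Z, e, g, he, hne, hfac⟩
  refine hne (splitMono_isIso T e he (g ≫ inv f) ?_)
  rw [← Category.assoc, ← hfac]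
  simp

lemma reg_of_isIso {X Y : B} (f : X ⟶ Y) (hf : IsIso f) : Regular T.Edual f := by
  rintro ⟨Z, g, h, hh, hn, hfac⟩
  refine hn (splitEpi_isIso T h hh (inv f ≫ g) ?_)
  rw [Category.assoc, ← hfac]
  simp

/-- The middle part of any (T1)-factorization of an arrow of `B̄` is invertible. -/
lemma mid_isIso {X Y : B} {f : X ⟶ Y} (hf : Bbar T f) (F : Fact T.E T.Edual f) :
    IsIso F.m := by
  obtain ⟨Wo, e, d, he, hd, hfac⟩ := hf
  obtain ⟨p, ⟨-, hp2, -⟩, -⟩ := T.t1_unique F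
    (⟨Wo, Wo, e, 𝟙 Wo, d, he,
      ⟨mon_of_isIso T (𝟙 Wo) inferInstance, reg_of_isIso T (𝟙 Wo) inferInstance⟩, hd,
      by rw [Category.id_comp]; exact hfac.symm⟩ : Fact T.E T.Edual f)
  have hp2' : p.1.hom ≫ 𝟙 Wo = F.m ≫ p.2.hom := hp2
  rw [Category.comp_id] at hp2'
  have hm : F.m = p.1.hom ≫ p.2.inv := by
    rw [hp2']; simp
  rw [hm]; infer_instance

end Lemmas

section Bar

variable (T : DKTriple B)

/-- The Epis of the reduced triple. -/
def Ebar : MorphismProperty (WideSubcategory (Bbar T)) := fun _ _ f => T.E f.1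

/-- The dual Epis of the reduced triple. -/
def Edbar : MorphismProperty (WideSubcategory (Bbar T)) := fun _ _ f => T.Edual f.1

/-- Lift an isomorphism of `B` to the wide subcategory `B̄`. -/
def liftIso {X Y : WideSubcategory (Bbar T)} (u : X.obj ≅ Y.obj) : X ≅ Y where
  hom := ⟨u.hom, bbar_of_isIso T u.hom inferInstance⟩
  inv := ⟨u.inv, bbar_of_isIso T u.inv inferInstance⟩
  hom_inv_id := InducedWideCategory.Hom.ext (by simp)
  inv_hom_id := InducedWideCategory.Hom.ext (by simp)

@[simp] lemma liftIso_hom {X Y : WideSubcategory (Bbar T)} (u : X.obj ≅ Y.obj) :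
    ((liftIso T u).hom : X ⟶ Y).1 = u.hom := rfl

/-- Forget an isomorphism of `B̄` down to `B`. -/
def downIso {X Y : WideSubcategory (Bbar T)} (u : X ≅ Y) : X.obj ≅ Y.obj where
  hom := u.hom.1
  inv := u.inv.1
  hom_inv_id := congrArg InducedWideCategory.Hom.hom u.hom_inv_id
  inv_hom_id := congrArg InducedWideCategory.Hom.hom u.inv_hom_id

lemma isIso_val {X Y : WideSubcategory (Bbar T)} (f : X ⟶ Y) (h : IsIso f) :
    IsIso f.1 :=
  ⟨(inv f).1, congrArg InducedWideCategory.Hom.hom (IsIso.hom_inv_id f),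
    congrArg InducedWideCategory.Hom.hom (IsIso.inv_hom_id f)⟩

lemma isIso_of_val {X Y : WideSubcategory (Bbar T)} (f : X ⟶ Y) (h : IsIso f.1) :
    IsIso f := by
  refine ⟨⟨inv f.1, bbar_of_isIso T _ inferInstance⟩, ?_, ?_⟩ <;>
    exact InducedWideCategory.Hom.ext (by simp)

lemma mon_val {X Y : WideSubcategory (Bbar T)} (f : X ⟶ Y)
    (hf : Mon (Ebar T) f) : Mon T.E f.1 := by
  rintro ⟨Z, e, k, he, hne, hfac⟩
  obtain ⟨F⟩ := T.t1_exists k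
  have hFm : IsIso F.m := by
    refine mid_isIso T f.2
      ⟨F.Z, F.W, e ≫ F.e, F.m, F.d, T.E_comp he F.he, F.hm, F.hd, ?_⟩
    rw [Category.assoc, F.fac]
    exact hfac.symm
  refine hf ⟨⟨Z⟩, ⟨e, bbar_of_E T he⟩,
    ⟨F.e ≫ F.m ≫ F.d,
      ⟨F.W, F.e ≫ F.m, F.d, T.E_comp F.he (T.E_iso F.m hFm), F.hd,
        (Category.assoc _ _ _).symm⟩⟩,
    he, fun h => hne (isIso_val T _ h), InducedWideCategory.Hom.ext ?_⟩
  show f.1 = e ≫ F.e ≫ F.m ≫ F.d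
  rw [F.fac]
  exact hfac

lemma mon_of_val {X Y : WideSubcategory (Bbar T)} (f : X ⟶ Y)
    (hf : Mon T.E f.1) : Mon (Ebar T) f := by
  rintro ⟨Z, e, g, he, hne, hfac⟩
  exact hf ⟨Z.obj, e.1, g.1, he, fun h => hne (isIso_of_val T _ h),
    congrArg InducedWideCategory.Hom.hom hfac⟩

lemma sing_val {X Y : WideSubcategory (Bbar T)} (f : X ⟶ Y)
    (hf : Sing (Edbar T) f) : Sing T.Edual f.1 := by
  obtain ⟨Z, g, h, hh, hn, hfac⟩ := hf
  exact ⟨Z.obj, g.1, h.1, hh, fun hi => hn (isIso_of_val T _ hi),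
    congrArg InducedWideCategory.Hom.hom hfac⟩

lemma sing_of_val {X Y : WideSubcategory (Bbar T)} (f : X ⟶ Y)
    (hf : Sing T.Edual f.1) : Sing (Edbar T) f := by
  obtain ⟨Z, g, h, hh, hn, hfac⟩ := hf
  obtain ⟨F⟩ := T.t1_exists g
  have hFm : IsIso F.m := by
    refine mid_isIso T f.2
      ⟨F.Z, F.W, F.e, F.m, F.d ≫ h, F.he, F.hm, T.Edual_comp F.hd hh, ?_⟩
    rw [hfac]
    calc F.e ≫ F.m ≫ F.d ≫ h = (F.e ≫ F.m ≫ F.d) ≫ h := by simp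
      _ = g ≫ h := by rw [F.fac]
  refine ⟨⟨F.W⟩, ⟨F.e ≫ F.m, bbar_of_E T (T.E_comp F.he (T.E_iso F.m hFm))⟩,
    ⟨F.d ≫ h, bbar_of_Edual T (T.Edual_comp F.hd hh)⟩,
    T.Edual_comp F.hd hh, ?_, InducedWideCategory.Hom.ext ?_⟩
  · intro hi
    have hi' : IsIso (F.d ≫ h) := isIso_val T _ hi
    refine hn (splitEpi_isIso T h hh (inv (F.d ≫ h) ≫ F.d) ?_)
    rw [Category.assoc]
    simp
  · show f.1 = (F.e ≫ F.m) ≫ F.d ≫ h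
    rw [hfac]
    calc g ≫ h = (F.e ≫ F.m ≫ F.d) ≫ h := by rw [F.fac]
      _ = (F.e ≫ F.m) ≫ F.d ≫ h := by simp

lemma reg_val {X Y : WideSubcategory (Bbar T)} (f : X ⟶ Y)
    (hf : Regular (Edbar T) f) : Regular T.Edual f.1 :=
  fun hs => hf (sing_of_val T f hs)

lemma reg_of_val {X Y : WideSubcategory (Bbar T)} (f : X ⟶ Y)
    (hf : Regular T.Edual f.1) : Regular (Edbar T) f :=
  fun hs => hf (sing_val T f hs)

end Bar

/-- The DK-triple structure on the wide subcategory `B̄`. -/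
def barTriple (T : DKTriple B) : DKTriple (WideSubcategory (Bbar T)) where
  E := Ebar T
  Edual := Edbar T
  E_iso f hf := T.E_iso f.1 (isIso_val T f hf)
  Edual_iso f hf := T.Edual_iso f.1 (isIso_val T f hf)
  E_comp hf hg := T.E_comp hf hg
  Edual_comp hf hg := T.Edual_comp hf hg
  t1_exists f := by
    obtain ⟨Wo, e, d, he, hd, hfac⟩ := f.2
    refine ⟨⟨(⟨Wo⟩ : WideSubcategory (Bbar T)), (⟨Wo⟩ : WideSubcategory (Bbar T)),
      ⟨e, bbar_of_E T he⟩, 𝟙 (⟨Wo⟩ : WideSubcategory (Bbar T)),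
      ⟨d, bbar_of_Edual T hd⟩, he, ⟨?_, ?_⟩, hd, ?_⟩⟩
    · exact mon_of_val T _ (mon_of_isIso T (𝟙 Wo) inferInstance)
    · exact reg_of_val T _ (reg_of_isIso T (𝟙 Wo) inferInstance)
    · exact InducedWideCategory.Hom.ext (by show e ≫ 𝟙 Wo ≫ d = f.1
                                            rw [Category.id_comp]; exact hfac.symm)
  t1_unique {X Y f} F₁ F₂ := by
    let G : Fact (Ebar T) (Edbar T) f → Fact T.E T.Edual f.1 := fun F =>
      ⟨F.Z.obj, F.W.obj, F.e.1, F.m.1, F.d.1, F.he,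
        ⟨mon_val T _ F.hm.1, reg_val T _ F.hm.2⟩, F.hd, congrArg InducedWideCategory.Hom.hom F.fac⟩
    obtain ⟨p, ⟨hp1, hp2, hp3⟩, hu⟩ := T.t1_unique (G F₁) (G F₂)
    refine ⟨(liftIso T p.1, liftIso T p.2),
      ⟨InducedWideCategory.Hom.ext hp1, InducedWideCategory.Hom.ext hp2, InducedWideCategory.Hom.ext hp3⟩, ?_⟩
    rintro q ⟨hq1, hq2, hq3⟩
    have hqp := hu (downIso T q.1, downIso T q.2)
      ⟨congrArg InducedWideCategory.Hom.hom hq1, congrArg InducedWideCategory.Hom.hom hq2, congrArg InducedWideCategory.Hom.hom hq3⟩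
    have e1 : q.1.hom.1 = p.1.hom := congrArg (fun z => z.1.hom) hqp
    have e2 : q.2.hom.1 = p.2.hom := congrArg (fun z => z.2.hom) hqp
    exact Prod.ext (Iso.ext (InducedWideCategory.Hom.ext e1)) (Iso.ext (InducedWideCategory.Hom.ext e2))
  t2 b := by
    obtain ⟨n, hn, cE, eR, cD, dR, hE, hD, hEu, hDu, hdiag, hlow⟩ := T.t2 b.obj
    refine ⟨n, hn, fun i => ⟨cE i⟩, fun i => ⟨eR i, bbar_of_E T (hE i)⟩,
      fun i => ⟨cD i⟩, fun i => ⟨dR i, bbar_of_Edual T (hD i)⟩,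
      fun i => hE i, fun i => hD i, ?_, ?_, ?_, ?_⟩
    · intro c e he
      obtain ⟨i, ⟨u, hu⟩, hiu⟩ := hEu e.1 he
      refine ⟨i, ⟨liftIso T u, InducedWideCategory.Hom.ext hu⟩, ?_⟩
      rintro j ⟨v, hv⟩
      exact hiu j ⟨downIso T v, congrArg InducedWideCategory.Hom.hom hv⟩
    · intro c d hd
      obtain ⟨j, ⟨u, hu⟩, hju⟩ := hDu d.1 hd
      refine ⟨j, ⟨liftIso T u, InducedWideCategory.Hom.ext hu⟩, ?_⟩
      rintro i ⟨v, hv⟩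
      exact hju i ⟨downIso T v, congrArg InducedWideCategory.Hom.hom hv⟩
    · intro i
      exact isIso_of_val T _ (hdiag i)
    · intro i j hij hiso
      exact hlow i j hij (isIso_val T _ hiso)
  t3 {X Y Z f g} _ _ := by
    obtain ⟨Wo, e, d, he, hd, hfac⟩ := (f ≫ g).2
    exact ⟨⟨Wo⟩, ⟨e, bbar_of_E T he⟩, ⟨d, bbar_of_Edual T hd⟩, he, hd,
      InducedWideCategory.Hom.ext hfac⟩
  t4 hf hg := mon_of_val T _
    (T.t4 ⟨mon_val T _ hf.1, reg_val T _ hf.2⟩ ⟨mon_val T _ hg.1, reg_val T _ hg.2⟩)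
  t5 hf hg := sing_of_val T _ (T.t5 (sing_val T _ hf) (mon_val T _ hg))

/-- The set of arrows `B̄ := E^∨ ∘ E` of a DK-triple `(B, E, E^∨)` is a wide
subcategory of `B` (it contains all identities and is closed under composition),
and the datum `(B̄, E, E^∨)` is again a DK-triple, which is moreover reduced. -/
theorem bbar_dkTriple (T : DKTriple B) :
    (∀ X : B, Bbar T (𝟙 X)) ∧
    (∀ {X Y Z : B} (f : X ⟶ Y) (g : Y ⟶ Z),
      Bbar T f → Bbar T g → Bbar T (f ≫ g)) ∧
    ∃ T' : DKTriple (WideSubcategory (Bbar T)),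
      (∀ {X Y : WideSubcategory (Bbar T)} (f : X ⟶ Y), T'.E f ↔ T.E f.1) ∧
      (∀ {X Y : WideSubcategory (Bbar T)} (f : X ⟶ Y), T'.Edual f ↔ T.Edual f.1) ∧
      T'.Reduced := by
  refine ⟨fun X => (Bbar T).id_mem X, fun f g hf hg => T.t3 hf hg,
    barTriple T, fun f => Iff.rfl, fun f => Iff.rfl, fun {X Y} f => ?_⟩
  obtain ⟨Wo, e, d, he, hd, hfac⟩ := f.2
  exact ⟨⟨Wo⟩, ⟨e, bbar_of_E T he⟩, ⟨d, bbar_of_Edual T hd⟩, he, hd,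
    InducedWideCategory.Hom.ext hfac⟩


end DK
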